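/- Suppose θ < κ are uncountable cardinals with κ regular, every narrow κ-system of width < θ has a cofinal branch (NSP(θ,κ)), and κ carries an ultrafilter U that is μ-indecomposable for every cardinal μ ∈ [θ, κ) and uniform. Then κ has the tree property: every tree of height κ all of whose levels have size < κ has a cofinal branch. -/

import Mathlib

open Set Cardinal

/-- An ultrafilter `U` over `I` is `μ`-decomposable if there is `f : I → μ` such that
`f ⁻¹' H ∉ U` for every `H ⊆ μ` of cardinality `< μ`. -/
def MuDecomposable {I : Type} (U : Ultrafilter I) (μ : Cardinal.{0}) : Prop :=
  ∃ f : I → μ.out, ∀ H : Set μ.out, #H < μ → f ⁻¹' H ∉ U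

/-- `U` is uniform: every member has full cardinality. -/
def UniformUF {I : Type} (U : Ultrafilter I) : Prop := ∀ X ∈ U, #X = #I

/-- A tree, presented by its strict order and a level function. -/
structure OrdTree where
  carrier : Type
  lt : carrier → carrier → Prop
  level : carrier → Ordinal.{0}

/-- `T` is a tree of height `lam`: transitive irreflexive, levels respect the order,
each node has a unique predecessor on every lower level, predecessors are comparable,
and every level `< lam` (and no other) is occupied. -/
def OrdTree.IsOfHeight (T : OrdTree) (lam : Ordinal.{0}) : Prop :=
  (∀ x y z, T.lt x y → T.lt y z → T.lt x z) ∧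
  (∀ x, ¬ T.lt x x) ∧
  (∀ x y, T.lt x y → T.level x < T.level y) ∧
  (∀ y, ∀ α < T.level y, ∃! x, T.lt x y ∧ T.level x = α) ∧
  (∀ x y z, T.lt x z → T.lt y z → (x = y ∨ T.lt x y ∨ T.lt y x)) ∧
  (∀ x, T.level x < lam) ∧ (∀ α < lam, ∃ x, T.level x = α)

/-- All levels of `T` below `lam` have size `< κ`. -/
def OrdTree.SmallLevels (T : OrdTree) (lam : Ordinal.{0}) (κ : Cardinal.{0}) : Prop :=
  ∀ α < lam, #{x : T.carrier // T.level x = α} < κ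

/-- `B` is a cofinal branch of `T` (with respect to height `lam`). -/
def OrdTree.CofinalBranch (T : OrdTree) (lam : Ordinal.{0}) (B : Set T.carrier) : Prop :=
  (∀ x ∈ B, ∀ y ∈ B, x = y ∨ T.lt x y ∨ T.lt y x) ∧
  ∀ α < lam, ∃ x ∈ B, α ≤ T.level x

/-- Data of a `κ`-system: an index set of levels `I`, widths `θFun`, and a family of
binary relations on pairs `(α, β)` with `α ∈ I`, `β < θFun α`. -/
structure SysData where
  I : Set Ordinal.{0}
  θFun : Ordinal.{0} → Cardinal.{0}
  ι : Type
  rel : ι → Ordinal.{0} × Ordinal.{0} → Ordinal.{0} × Ordinal.{0} → Prop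

/-- The underlying set of nodes of the system. -/
def SysData.dom (S : SysData) : Set (Ordinal.{0} × Ordinal.{0}) :=
  {p | p.1 ∈ S.I ∧ p.2 < (S.θFun p.1).ord}

/-- `S` is a `κ`-system. -/
def IsKSystem (κ : Cardinal.{0}) (S : SysData) : Prop :=
  S.I ⊆ Set.Iio κ.ord ∧ (∀ η < κ.ord, ∃ α ∈ S.I, η ≤ α) ∧
  (∀ α ∈ S.I, 0 < S.θFun α ∧ S.θFun α < κ) ∧
  Nonempty S.ι ∧ #S.ι < κ ∧
  (∀ r : S.ι, ∀ a b c, S.rel r a b → S.rel r b c → S.rel r a c) ∧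
  (∀ r : S.ι, ∀ a b c, a ∈ S.dom → b ∈ S.dom → c ∈ S.dom →
    S.rel r a c → S.rel r b c → (a = b ∨ S.rel r a b ∨ S.rel r b a)) ∧
  (∀ r : S.ι, ∀ a b, a ∈ S.dom → b ∈ S.dom → S.rel r a b → a.1 < b.1) ∧
  (∀ α₀ ∈ S.I, ∀ α₁ ∈ S.I, α₀ < α₁ →
    ∃ β₀ β₁, ∃ r : S.ι, β₀ < (S.θFun α₀).ord ∧ β₁ < (S.θFun α₁).ord ∧
      S.rel r (α₀, β₀) (α₁, β₁))

/-- The width of `S` is `< θ`. -/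
def WidthLt (S : SysData) (θ : Cardinal.{0}) : Prop :=
  ∃ ν < θ, #S.ι ≤ ν ∧ ∀ α ∈ S.I, S.θFun α ≤ ν

/-- `S` has a cofinal branch. -/
def HasCofinalSysBranch (κ : Cardinal.{0}) (S : SysData) : Prop :=
  ∃ (r : S.ι) (B : Set (Ordinal.{0} × Ordinal.{0})), B ⊆ S.dom ∧
    (∀ a ∈ B, ∀ b ∈ B, a = b ∨ S.rel r a b ∨ S.rel r b a) ∧
    ∀ η < κ.ord, ∃ a ∈ B, η ≤ a.1

/-- If `θ < κ` are uncountable cardinals, `κ` is regular, `NSP(θ,κ)` holds (every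
narrow `κ`-system of width `< θ` has a cofinal branch), and `κ` carries a uniform
ultrafilter that is `μ`-indecomposable for every cardinal `μ ∈ [θ,κ)`, then `κ` has
the tree property. -/
noncomputable def otypein (o : Ordinal.{0}) (x : o.ToType) : Ordinal.{0} :=
  @Ordinal.typein o.ToType (· < ·) isWellOrder_lt x

lemma otypein_lt_self (o : Ordinal.{0}) (x : o.ToType) : otypein o x < o :=
  Ordinal.typein_lt_self x

lemma otypein_injective (o : Ordinal.{0}) : Function.Injective (otypein o) :=
  fun _ _ h => (@Ordinal.typein_injective o.ToType (· < ·) isWellOrder_lt) h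

lemma mk_le_card_of_ordinal_bound {A : Type} (g : A → Ordinal.{0})
    (hg : Function.Injective g) (η : Ordinal.{0}) (hb : ∀ a, g a < η) :
    #A ≤ η.card := by
  have h1 : #(ULift.{1} A) ≤ #(Set.Iio η) := by
    refine Cardinal.mk_le_of_injective
      (f := fun x : ULift.{1} A => (⟨g x.down, hb _⟩ : Set.Iio η)) ?_
    intro a b hab
    exact ULift.ext _ _ (hg (congrArg Subtype.val hab))
  rw [Cardinal.mk_uLift, Ordinal.mk_Iio_ordinal] at h1
  exact Cardinal.lift_le.mp h1

lemma exists_small_preimage {K : Type} {θ κ : Cardinal.{0}}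
    (U : Ultrafilter K)
    (hind : ∀ μ : Cardinal.{0}, θ ≤ μ → μ < κ → ¬ MuDecomposable U μ) :
    ∀ μ : Cardinal.{0}, μ < κ → ∀ (A : Type) (_ : #A = μ) (f : K → A),
      ∃ H : Set A, #H < θ ∧ f ⁻¹' H ∈ U := by
  classical
  intro μ
  refine Cardinal.lt_wf.induction
    (C := fun μ => μ < κ → ∀ (A : Type) (_ : #A = μ) (f : K → A),
      ∃ H : Set A, #H < θ ∧ f ⁻¹' H ∈ U) μ ?_
  intro μ IH hμκ A hA f
  by_cases hc : μ < θ
  · exact ⟨Set.univ, by rwa [mk_univ, hA],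
      by rw [Set.preimage_univ]; exact Filter.univ_mem⟩
  · have hθμ : θ ≤ μ := le_of_not_gt hc
    obtain ⟨e⟩ := Cardinal.eq.mp (show #A = #(μ.out) by rw [hA, mk_out])
    have hnd := hind μ hθμ hμκ
    rw [MuDecomposable] at hnd; push_neg at hnd
    obtain ⟨H0, hH0, hm⟩ := hnd (fun k => e (f k))
    set H1 : Set A := e ⁻¹' H0 with hH1def
    have hm1 : f ⁻¹' H1 ∈ U := hm
    have hcard1 : #H1 < μ := by
      rw [hH1def, ← Equiv.image_symm_eq_preimage,
        Cardinal.mk_image_eq e.symm.injective]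
      exact hH0
    obtain ⟨k0, hk0⟩ := U.nonempty_of_mem hm1
    have hk0' : f k0 ∈ H1 := hk0
    set g : K → ↥H1 := fun k => if h : f k ∈ H1 then ⟨f k, h⟩ else ⟨f k0, hk0'⟩ with hg
    obtain ⟨H', hH'θ, hH'U⟩ := IH #↥H1 hcard1 (hcard1.trans hμκ) ↥H1 rfl g
    refine ⟨Subtype.val '' H', by rwa [Cardinal.mk_image_eq Subtype.val_injective], ?_⟩
    refine Filter.mem_of_superset (Filter.inter_mem hm1 hH'U) ?_
    rintro k ⟨hk1, hk2⟩
    have : g k = ⟨f k, hk1⟩ := dif_pos hk1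
    have hk2' : (⟨f k, hk1⟩ : ↥H1) ∈ H' := this ▸ hk2
    exact ⟨⟨f k, hk1⟩, hk2', rfl⟩

theorem stmt9 {K : Type} (θ κ : Cardinal.{0})
    (hθunc : Cardinal.aleph0 < θ) (hκunc : Cardinal.aleph0 < κ) (hθκ : θ < κ)
    (hκreg : κ.IsRegular) (hK : #K = κ)
    (hNSP : ∀ S : SysData, IsKSystem κ S → WidthLt S θ → HasCofinalSysBranch κ S)
    (U : Ultrafilter K) (hU : UniformUF U)
    (hind : ∀ μ : Cardinal.{0}, θ ≤ μ → μ < κ → ¬ MuDecomposable U μ) :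
    ∀ T : OrdTree, T.IsOfHeight κ.ord → T.SmallLevels κ.ord κ →
      ∃ B, T.CofinalBranch κ.ord B := by
  classical
  intro T hT hS
  obtain ⟨htrans, hirr, hlevlt, hpred, hcomp, hlevbd, hlevsurj⟩ := hT
  have hκ0 : (0 : Ordinal) < κ.ord := by
    rw [Cardinal.lt_ord, Ordinal.card_zero]; exact hκreg.pos
  have hcardlt : ∀ {η : Ordinal.{0}}, η < κ.ord → η.card < κ :=
    fun h => Cardinal.lt_ord.mp h
  -- level ordinal assignment to elements of K
  obtain ⟨eK⟩ := Cardinal.eq.mp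
    (show #K = #(κ.ord.ToType) by rw [hK, Cardinal.mk_toType, Cardinal.card_ord])
  set lv : K → Ordinal.{0} :=
    fun k => otypein κ.ord (eK k) with hlvdef
  have hlvlt : ∀ k, lv k < κ.ord := fun k => otypein_lt_self _ (eK k)
  have hlvinj : Function.Injective lv := by
    intro a b hab
    exact eK.injective (otypein_injective _ hab)
  -- tails are in U
  have hbig : ∀ η < κ.ord, {k | η < lv k} ∈ U := by
    intro η hη
    refine Ultrafilter.compl_notMem_iff.mp ?_
    intro hmem
    have hcard := hU _ hmem
    have hsucc : η < η + 1 := by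
      rw [Ordinal.add_one_eq_succ]; exact Order.lt_succ η
    have hle : #(↥({k | η < lv k}ᶜ)) ≤ (η + 1).card := by
      refine mk_le_card_of_ordinal_bound (fun x : ↥({k | η < lv k}ᶜ) => lv x.1)
        (fun a b hab => Subtype.ext (hlvinj hab)) _ (fun a => ?_)
      exact lt_of_le_of_lt (not_lt.mp a.2) hsucc
    have hltκ : (η + 1).card < κ := by
      rw [Ordinal.add_one_eq_succ, Ordinal.card_succ]
      exact Cardinal.add_lt_of_lt hκreg.aleph0_le (hcardlt hη)
        (one_lt_aleph0.trans hκunc)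
    rw [hcard, hK] at hle
    exact absurd (hle.trans_lt hltκ) (lt_irrefl κ)
  -- pick a node at each level lv k
  have hxk' : ∀ k, ∃ x, T.level x = lv k := fun k => hlevsurj _ (hlvlt k)
  choose xk hxk using hxk'
  -- predecessor function
  have hpr' : ∀ (x : T.carrier) (α : Ordinal.{0}),
      ∃ y, α < T.level x → (T.lt y x ∧ T.level y = α) := by
    intro x α
    by_cases h : α < T.level x
    · obtain ⟨y, hy, -⟩ := hpred x α h
      exact ⟨y, fun _ => hy⟩
    · exact ⟨x, fun h' => absurd h' h⟩
  choose pr hpr using hpr'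
  -- per-level small sets
  have hstep : ∀ α : Ordinal.{0}, ∃ Hs : Set T.carrier, α < κ.ord →
      (∀ y ∈ Hs, T.level y = α) ∧ #Hs < θ ∧ Hs.Nonempty ∧
      {k | α < lv k ∧ pr (xk k) α ∈ Hs} ∈ U := by
    intro α
    by_cases hα : α < κ.ord
    · obtain ⟨x0, hx0⟩ := hlevsurj α hα
      have hLcard : #{x : T.carrier // T.level x = α} < κ := hS α hα
      set f : K → {x : T.carrier // T.level x = α} := fun k =>
        if h : α < lv k then
          ⟨pr (xk k) α, (hpr (xk k) α (by rw [hxk k]; exact h)).2⟩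
        else ⟨x0, hx0⟩ with hf
      obtain ⟨H', hH'θ, hH'U⟩ := exists_small_preimage U hind
        #{x : T.carrier // T.level x = α} hLcard _ rfl f
      have hUA : {k | α < lv k ∧ pr (xk k) α ∈ Subtype.val '' H'} ∈ U := by
        refine Filter.mem_of_superset (Filter.inter_mem (hbig α hα) hH'U) ?_
        rintro k ⟨hk1, hk2⟩
        refine ⟨hk1, ⟨f k, hk2, ?_⟩⟩
        have hfk : f k = ⟨pr (xk k) α, (hpr (xk k) α (by rw [hxk k]; exact hk1)).2⟩ :=
          dif_pos hk1
        rw [hfk]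
      refine ⟨Subtype.val '' H', fun _ => ⟨?_, ?_, ?_, hUA⟩⟩
      · rintro y ⟨⟨y', hy'⟩, -, rfl⟩; exact hy'
      · rwa [Cardinal.mk_image_eq Subtype.val_injective]
      · obtain ⟨k, hk⟩ := U.nonempty_of_mem hUA
        exact ⟨pr (xk k) α, hk.2⟩
    · exact ⟨∅, fun h => absurd h hα⟩
  choose Hs hHs using hstep
  -- fiber argument: find ν < θ with unboundedly many α with #(Hs α) = ν
  have hordθ : ∀ {α : Ordinal.{0}}, α < κ.ord → (#(Hs α)).ord < θ.ord :=
    fun hα => Cardinal.ord_lt_ord.mpr (hHs _ hα).2.1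
  set c : κ.ord.ToType → θ.ord.ToType := fun x =>
    ((Ordinal.ToType.mk (o := θ.ord)))
      ⟨(#(Hs (otypein κ.ord x))).ord,
        hordθ (otypein_lt_self _ x)⟩ with hcdef
  have hbx : ∃ b : θ.ord.ToType, κ ≤ #(c ⁻¹' {b}) := by
    by_contra hno
    push_neg at hno
    have h1 : #(κ.ord.ToType) ≤ Cardinal.sum (fun b : θ.ord.ToType => #(c ⁻¹' {b})) := by
      rw [← Cardinal.mk_sigma]
      exact (Cardinal.mk_congr (Equiv.sigmaFiberEquiv c).symm).le
    have h2 : Cardinal.sum (fun b : θ.ord.ToType => #(c ⁻¹' {b})) < κ :=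
      Cardinal.sum_lt_of_isRegular hκreg
        (by rw [Cardinal.mk_toType, Cardinal.card_ord]; exact hθκ) hno
    rw [Cardinal.mk_toType, Cardinal.card_ord] at h1
    exact absurd (h1.trans_lt h2) (lt_irrefl κ)
  obtain ⟨b, hb⟩ := hbx
  set ξ : Ordinal.{0} := (((Ordinal.ToType.mk (o := θ.ord))).symm b).1 with hξdef
  set ν : Cardinal.{0} := ξ.card with hνdef
  have hfiber : ∀ x : κ.ord.ToType, c x = b →
      #(Hs (otypein κ.ord x)) = ν := by
    intro x hx
    have h1 : ((Ordinal.ToType.mk (o := θ.ord))).symm (c x)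
        = ((Ordinal.ToType.mk (o := θ.ord))).symm b := by rw [hx]
    rw [hcdef] at h1
    simp only [OrderIso.symm_apply_apply] at h1
    have h2 : (#(Hs (otypein κ.ord x))).ord = ξ := by
      rw [hξdef, ← h1]
    rw [hνdef, ← h2, Cardinal.card_ord]
  set I : Set Ordinal.{0} := {α | α < κ.ord ∧ #(Hs α) = ν} with hIdef
  have hIunb : ∀ η < κ.ord, ∃ α ∈ I, η ≤ α := by
    intro η hη
    by_contra hno
    push_neg at hno
    have hsub : ∀ x : ↥(c ⁻¹' {b}),
        otypein κ.ord x.1 < η := by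
      intro x
      exact hno _ ⟨otypein_lt_self _ _, hfiber _ x.2⟩
    have hle : #(c ⁻¹' {b}) ≤ η.card :=
      mk_le_card_of_ordinal_bound
        (fun x : ↥(c ⁻¹' {b}) => otypein κ.ord x.1)
        (fun a b hab => Subtype.ext (otypein_injective _ hab)) η hsub
    exact absurd (hb.trans hle) (not_le.mpr (hcardlt hη))
  obtain ⟨α₀, hα₀I, -⟩ := hIunb 0 hκ0
  have hνθ : ν < θ := hα₀I.2 ▸ (hHs α₀ hα₀I.1).2.1
  have hν0 : 0 < ν := by
    rw [← hα₀I.2]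
    exact pos_iff_ne_zero.mpr (Cardinal.mk_ne_zero_iff.mpr ((hHs α₀ hα₀I.1).2.2.1).to_subtype)
  -- enumerations of the sets Hs α
  have henum : ∀ α : Ordinal.{0}, ∃ nd : Ordinal.{0} → T.carrier,
      (∀ β, β < (#(Hs α)).ord → nd β ∈ Hs α) ∧
      (∀ β β', β < (#(Hs α)).ord → β' < (#(Hs α)).ord → nd β = nd β' → β = β') ∧
      (∀ y ∈ Hs α, ∃ β, β < (#(Hs α)).ord ∧ nd β = y) := by
    intro α
    obtain ⟨t0, -⟩ := hlevsurj 0 hκ0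
    by_cases hne : Nonempty ↥(Hs α)
    · obtain ⟨eA⟩ := Cardinal.eq.mp
        (show #(((#(Hs α)).ord).ToType) = #(↥(Hs α)) by
          rw [Cardinal.mk_toType, Cardinal.card_ord])
      set E := (Ordinal.ToType.mk (o := ((#(Hs α)).ord))) with hE
      refine ⟨fun β => if h : β < (#(Hs α)).ord then (eA (E ⟨β, h⟩)).1 else t0,
        ?_, ?_, ?_⟩
      · intro β hβ
        simp only [dif_pos hβ]
        exact (eA (E ⟨β, hβ⟩)).2
      · intro β β' hβ hβ' hnd
        simp only [dif_pos hβ, dif_pos hβ'] at hnd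
        have h1 : eA (E ⟨β, hβ⟩) = eA (E ⟨β', hβ'⟩) := Subtype.ext hnd
        have h2 : E ⟨β, hβ⟩ = E ⟨β', hβ'⟩ := eA.injective h1
        have h3 : (⟨β, hβ⟩ : Set.Iio ((#(Hs α)).ord)) = ⟨β', hβ'⟩ := E.injective h2
        exact congrArg Subtype.val h3
      · intro y hy
        set t := E.symm (eA.symm ⟨y, hy⟩) with ht
        refine ⟨t.1, t.2, ?_⟩
        beta_reduce
        rw [dif_pos (show (t : Ordinal.{0}) < (#(Hs α)).ord from t.2)]
        show (eA (E t)).1 = y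
        rw [ht, E.apply_symm_apply, eA.apply_symm_apply]
    · refine ⟨fun _ => t0, ?_, ?_, ?_⟩
      · intro β hβ
        exfalso
        rw [show #(Hs α) = 0 from Cardinal.mk_eq_zero_iff.mpr (by simpa [Set.eq_empty_iff_forall_notMem] using hne),
          Cardinal.ord_zero] at hβ
        exact absurd hβ (not_lt_of_ge (zero_le (a := β)))
      · intro β β' hβ _ _
        exfalso
        rw [show #(Hs α) = 0 from Cardinal.mk_eq_zero_iff.mpr (by simpa [Set.eq_empty_iff_forall_notMem] using hne),
          Cardinal.ord_zero] at hβ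
        exact absurd hβ (not_lt_of_ge (zero_le (a := β)))
      · intro y hy
        exact absurd ⟨⟨y, hy⟩⟩ hne
  choose nd hnd1 hnd2 hnd3 using henum
  -- the system
  set Sys : SysData :=
    { I := I, θFun := fun α => #(Hs α), ι := Unit,
      rel := fun _ a b => a.1 < b.1 ∧ T.lt (nd a.1 a.2) (nd b.1 b.2) } with hSys
  have hnodelev : ∀ p ∈ Sys.dom, T.level (nd p.1 p.2) = p.1 ∧ nd p.1 p.2 ∈ Hs p.1 := by
    rintro p ⟨hpI, hpβ⟩
    have hm := hnd1 p.1 p.2 hpβ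
    exact ⟨(hHs p.1 hpI.1).1 _ hm, hm⟩
  have hKsys : IsKSystem κ Sys := by
    refine ⟨fun α hα => hα.1, hIunb, ?_, ⟨()⟩, ?_, ?_, ?_, ?_, ?_⟩
    · intro α hα
      constructor
      · rw [show Sys.θFun α = #(Hs α) from rfl, hα.2]
        exact hν0
      · exact (hHs α hα.1).2.1.trans hθκ
    · rw [show #Sys.ι = 1 from Cardinal.mk_punit]
      exact one_lt_aleph0.trans hκunc
    · rintro r a b c ⟨h1, h2⟩ ⟨h3, h4⟩
      exact ⟨h1.trans h3, htrans _ _ _ h2 h4⟩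
    · rintro r ⟨a1, a2⟩ ⟨b1, b2⟩ c ha hb hc ⟨-, hac⟩ ⟨-, hbc⟩
      rcases hcomp _ _ _ hac hbc with heq | hlt | hlt
      · have hla : T.level (nd a1 a2) = a1 := (hnodelev _ ha).1
        have hlb : T.level (nd b1 b2) = b1 := (hnodelev _ hb).1
        have h1 : a1 = b1 := by rw [← hla, ← hlb, heq]
        subst h1
        have h2 : a2 = b2 := hnd2 a1 a2 b2 ha.2 hb.2 heq
        left; rw [h2]
      · refine Or.inr (Or.inl ⟨?_, hlt⟩)
        show a1 < b1
        rw [← show T.level (nd a1 a2) = a1 from (hnodelev _ ha).1,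
          ← show T.level (nd b1 b2) = b1 from (hnodelev _ hb).1]
        exact hlevlt _ _ hlt
      · refine Or.inr (Or.inr ⟨?_, hlt⟩)
        show b1 < a1
        rw [← show T.level (nd a1 a2) = a1 from (hnodelev _ ha).1,
          ← show T.level (nd b1 b2) = b1 from (hnodelev _ hb).1]
        exact hlevlt _ _ hlt
    · rintro r a b ha hb ⟨h1, -⟩
      exact h1
    · intro α₀ h₀ α₁ h₁ hlt01
      have hU0 := (hHs α₀ h₀.1).2.2.2
      have hU1 := (hHs α₁ h₁.1).2.2.2
      obtain ⟨k, hk0, hk1⟩ := U.nonempty_of_mem (Filter.inter_mem hU0 hU1)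
      have hp0 := hpr (xk k) α₀ (by rw [hxk k]; exact hk0.1)
      have hp1 := hpr (xk k) α₁ (by rw [hxk k]; exact hk1.1)
      have hlty : T.lt (pr (xk k) α₀) (pr (xk k) α₁) := by
        rcases hcomp _ _ _ hp0.1 hp1.1 with heq | h | h
        · exfalso
          have h5 := hp0.2
          rw [heq, hp1.2] at h5
          exact absurd h5 (ne_of_gt hlt01)
        · exact h
        · exfalso
          have h5 := hlevlt _ _ h
          rw [hp0.2, hp1.2] at h5
          exact absurd h5 (not_lt.mpr hlt01.le)
      obtain ⟨β₀, hβ₀, hndβ₀⟩ := hnd3 α₀ _ hk0.2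
      obtain ⟨β₁, hβ₁, hndβ₁⟩ := hnd3 α₁ _ hk1.2
      exact ⟨β₀, β₁, (), hβ₀, hβ₁, hlt01, by
        show T.lt (nd (α₀, β₀).1 (α₀, β₀).2) (nd (α₁, β₁).1 (α₁, β₁).2)
        rw [show nd (α₀, β₀).1 (α₀, β₀).2 = nd α₀ β₀ from rfl,
          show nd (α₁, β₁).1 (α₁, β₁).2 = nd α₁ β₁ from rfl, hndβ₀, hndβ₁]
        exact hlty⟩
  have hW : WidthLt Sys θ := by
    refine ⟨ν, hνθ, ?_, fun α hα => le_of_eq hα.2⟩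
    rw [show #Sys.ι = 1 from Cardinal.mk_punit]
    exact Cardinal.one_le_iff_pos.mpr hν0
  obtain ⟨r, B, hBdom, hBcomp, hBcof⟩ := hNSP Sys hKsys hW
  refine ⟨(fun a : Ordinal.{0} × Ordinal.{0} => nd a.1 a.2) '' B, ?_, ?_⟩
  · rintro x ⟨a, haB, rfl⟩ y ⟨b', hbB, rfl⟩
    rcases hBcomp a haB b' hbB with rfl | ⟨-, h⟩ | ⟨-, h⟩
    · exact Or.inl rfl
    · exact Or.inr (Or.inl h)
    · exact Or.inr (Or.inr h)
  · intro η hη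
    obtain ⟨a, haB, hηa⟩ := hBcof η hη
    refine ⟨nd a.1 a.2, ⟨a, haB, rfl⟩, ?_⟩
    rw [(hnodelev a (hBdom haB)).1]
    exact hηa
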